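/- If u* and l* satisfy l* ≤ a↓_k ≤ u*, ∑_{i=1}^k max{u* − a↓_i, 0} = ∑_{j=k+1}^n max{a↓_j − l*, 0}, and ∑_{i=1}^n max{a_i − u*, 0} + k·l* = min{T_k(a), r}, then the vector x* defined by x*_i = a_i − (u* − l*) if a_i > u*, x*_i = l* if l* ≤ a_i ≤ u*, and x*_i = a_i if a_i < l*, is the Euclidean projection of a onto {x : T_k(x) ≤ r}. -/

import Mathlib

open Finset

/-- The entries of `a` rearranged in nonincreasing order. -/
noncomputable def sortDesc (n : ℕ) (a : Fin n → ℝ) : Fin n → ℝ :=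
  fun i => a (Tuple.sort a i.rev)

/-- The sum of the `k` largest entries of `a`. -/
noncomputable def topKSum (n k : ℕ) (a : Fin n → ℝ) : ℝ :=
  ∑ i : Fin n, if (i : ℕ) < k then sortDesc n a i else 0

lemma sortDesc_antitone (n : ℕ) (y : Fin n → ℝ) : Antitone (sortDesc n y) := by
  intro i j hij
  exact Tuple.monotone_sort y (Fin.rev_le_rev.2 hij)

lemma sortDesc_eq (n : ℕ) (y : Fin n → ℝ) (i : Fin n) :
    sortDesc n y i = y ((Fin.revPerm.trans (Tuple.sort y)) i) := rfl

lemma sum_ite_const (n k : ℕ) (hk : k ≤ n) (c : ℝ) :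
    ∑ i : Fin n, (if (i : ℕ) < k then c else 0) = k * c := by
  rw [Fin.sum_univ_eq_sum_range (fun i => if i < k then c else 0)]
  have : ∀ i ∈ Finset.range n, (if i < k then c else 0) = if i ∈ Finset.range k then c else 0 := by
    intro i _; simp [Finset.mem_range]
  rw [Finset.sum_congr rfl this, Finset.sum_ite_mem,
    Finset.inter_eq_right.mpr (Finset.range_subset_range.2 hk), Finset.sum_const, Finset.card_range]
  simp [mul_comm]

lemma keyA (n k : ℕ) (hk1 : 1 ≤ k) (hk : k ≤ n) (lam : ℝ) (d y : Fin n → ℝ)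
    (hd0 : ∀ i, 0 ≤ d i) (hd1 : ∀ i, d i ≤ lam) (hsumd : ∑ i, d i = (k : ℝ) * lam) :
    ∑ i, d i * y i ≤ lam * topKSum n k y := by
  set e : Equiv.Perm (Fin n) := Fin.revPerm.trans (Tuple.sort y) with he
  set c := sortDesc n y ⟨k - 1, by omega⟩ with hc
  have hbc : ∀ i : Fin n, (i : ℕ) < k → c ≤ y (e i) := by
    intro i hik
    rw [he, ← sortDesc_eq n y i]
    exact sortDesc_antitone n y (show i ≤ (⟨k - 1, by omega⟩ : Fin n) by
      simp only [Fin.le_def]; omega)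
  have hcb : ∀ i : Fin n, k ≤ (i : ℕ) → y (e i) ≤ c := by
    intro i hik
    rw [he, ← sortDesc_eq n y i]
    exact sortDesc_antitone n y (show (⟨k - 1, by omega⟩ : Fin n) ≤ i by
      simp only [Fin.le_def]; omega)
  have h1 : ∑ i, d i * y i = ∑ i, d (e i) * y (e i) :=
    (Equiv.sum_comp e fun i => d i * y i).symm
  have h2 : topKSum n k y = ∑ i : Fin n, if (i : ℕ) < k then y (e i) else 0 := rfl
  have h3 : ∑ i, d (e i) = (k : ℝ) * lam := by rw [Equiv.sum_comp e d]; exact hsumd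
  have hzero : ∑ i : Fin n, (d (e i) - if (i : ℕ) < k then lam else 0) * c = 0 := by
    rw [← Finset.sum_mul, Finset.sum_sub_distrib, h3, sum_ite_const n k hk lam]
    ring
  rw [h1, h2, ← sub_nonpos, Finset.mul_sum, ← Finset.sum_sub_distrib]
  calc ∑ i : Fin n, (d (e i) * y (e i) - lam * if (i : ℕ) < k then y (e i) else 0)
      ≤ ∑ i : Fin n, (d (e i) - if (i : ℕ) < k then lam else 0) * c := by
        apply Finset.sum_le_sum
        intro i _
        by_cases hik : (i : ℕ) < k
        · simp only [if_pos hik]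
          nlinarith [hbc i hik, hd1 (e i)]
        · simp only [if_neg hik]
          nlinarith [hcb i (le_of_not_gt hik), hd0 (e i)]
    _ = 0 := hzero

/-- If `(u*, l*)` satisfies the KKT system, then the vector built from `(u*, l*)`
is the Euclidean projection of `a` onto the top-`k`-sum constraint set. -/
theorem stmt16 (n k : ℕ) (hn : 2 ≤ n) (hk1 : 1 ≤ k) (hk : k < n) (r : ℝ)
    (a : Fin n → ℝ) (ustar lstar : ℝ)
    (hl : lstar ≤ sortDesc n a ⟨k - 1, by omega⟩)
    (hu : sortDesc n a ⟨k - 1, by omega⟩ ≤ ustar)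
    (harea : (∑ i : Fin n, if (i : ℕ) < k then max (ustar - sortDesc n a i) 0 else 0)
        = ∑ j : Fin n, if k ≤ (j : ℕ) then max (sortDesc n a j - lstar) 0 else 0)
    (hsum : (∑ i : Fin n, max (a i - ustar) 0) + (k : ℝ) * lstar
        = min (topKSum n k a) r) :
    topKSum n k (fun i =>
        if ustar < a i then a i - (ustar - lstar)
        else if lstar ≤ a i then lstar else a i) ≤ r ∧
    ∀ y : Fin n → ℝ, topKSum n k y ≤ r →
      ∑ i : Fin n, ((if ustar < a i then a i - (ustar - lstar)
          else if lstar ≤ a i then lstar else a i) - a i) ^ 2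
        ≤ ∑ i : Fin n, (y i - a i) ^ 2 := by
  have hlu : lstar ≤ ustar := hl.trans hu
  set lam := ustar - lstar with hlam_def
  have hlam : 0 ≤ lam := by simp only [hlam_def]; linarith
  set x : Fin n → ℝ := fun i =>
    if ustar < a i then a i - (ustar - lstar)
    else if lstar ≤ a i then lstar else a i with hx
  set d : Fin n → ℝ := fun i => max (a i - lstar) 0 - max (a i - ustar) 0 with hd
  have hd_eq : ∀ i, a i - x i = d i := by
    intro i; simp only [hx, hd]
    by_cases h1 : ustar < a i
    · rw [if_pos h1, max_eq_left (by linarith), max_eq_left (by linarith)]; ring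
    · rw [if_neg h1]; push_neg at h1
      by_cases h2 : lstar ≤ a i
      · rw [if_pos h2, max_eq_left (by linarith), max_eq_right (by linarith)]; ring
      · rw [if_neg h2]; push_neg at h2
        rw [max_eq_right (by linarith), max_eq_right (by linarith)]; ring
  have hd0 : ∀ i, 0 ≤ d i := by
    intro i; simp only [hd, sub_nonneg]
    exact max_le_max (by linarith) le_rfl
  have hd1 : ∀ i, d i ≤ lam := by
    intro i; simp only [hd, hlam_def]
    rcases le_total (a i) ustar with h | h
    · have h2 : max (a i - ustar) 0 = 0 := max_eq_right (by linarith)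
      have h3 : max (a i - lstar) 0 ≤ ustar - lstar := max_le (by linarith) (by linarith)
      linarith
    · rw [max_eq_left (by linarith), max_eq_left (by linarith)]; linarith
  -- sorted facts for a
  set b := sortDesc n a with hb
  set ea : Equiv.Perm (Fin n) := Fin.revPerm.trans (Tuple.sort a) with hea
  have hbe : ∀ i, b i = a (ea i) := fun i => sortDesc_eq n a i
  have hanti : Antitone b := sortDesc_antitone n a
  have hbk_l : ∀ i : Fin n, (i : ℕ) < k → lstar ≤ b i := by
    intro i hik
    exact hl.trans (hanti (show i ≤ (⟨k - 1, by omega⟩ : Fin n) by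
      simp only [Fin.le_def]; omega))
  have hbk_u : ∀ i : Fin n, k ≤ (i : ℕ) → b i ≤ ustar := by
    intro i hik
    exact (hanti (show (⟨k - 1, by omega⟩ : Fin n) ≤ i by
      simp only [Fin.le_def]; omega)).trans hu
  have hsum_d : ∑ i, d i = (k : ℝ) * lam := by
    have h1 : ∑ i, d i = ∑ i, d (ea i) := (Equiv.sum_comp ea d).symm
    have h2 : ∀ i : Fin n, d (ea i) =
        (if (i : ℕ) < k then lam else 0)
          - (if (i : ℕ) < k then max (ustar - b i) 0 else 0)
          + (if k ≤ (i : ℕ) then max (b i - lstar) 0 else 0) := by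
      intro i
      by_cases hik : (i : ℕ) < k
      · have hlb := hbk_l i hik
        simp only [hd, if_pos hik, if_neg (show ¬ k ≤ (i : ℕ) by omega), ← hbe]
        rw [max_eq_left (by linarith)]
        rcases le_total (b i) ustar with h | h
        · rw [max_eq_right (by linarith), max_eq_left (by linarith)]
          simp only [hlam_def]; ring
        · rw [max_eq_left (by linarith), max_eq_right (by linarith)]
          simp only [hlam_def]; ring
      · have hub := hbk_u i (by omega)
        simp only [hd, if_neg hik, if_pos (show k ≤ (i : ℕ) by omega), ← hbe]
        rw [show max (b i - ustar) 0 = 0 from max_eq_right (by linarith)]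
        ring
    rw [h1, Finset.sum_congr rfl fun i _ => h2 i, Finset.sum_add_distrib,
      Finset.sum_sub_distrib, harea, sum_ite_const n k hk.le lam]
    ring
  have hdx : ∀ i, d i * x i = lam * max (a i - ustar) 0 + lstar * d i := by
    intro i; simp only [hx, hd, hlam_def]
    by_cases h1 : ustar < a i
    · rw [if_pos h1, max_eq_left (by linarith), max_eq_left (by linarith)]; ring
    · rw [if_neg h1]; push_neg at h1
      by_cases h2 : lstar ≤ a i
      · rw [if_pos h2, max_eq_left (by linarith), max_eq_right (by linarith)]; ring
      · rw [if_neg h2]; push_neg at h2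
        rw [max_eq_right (by linarith), max_eq_right (by linarith)]; ring
  have hsum_dx : ∑ i, d i * x i = lam * min (topKSum n k a) r := by
    calc ∑ i, d i * x i = ∑ i, (lam * max (a i - ustar) 0 + lstar * d i) :=
          Finset.sum_congr rfl fun i _ => hdx i
      _ = lam * (∑ i, max (a i - ustar) 0) + lstar * ∑ i, d i := by
          rw [Finset.sum_add_distrib, Finset.mul_sum, Finset.mul_sum]
      _ = lam * ((∑ i, max (a i - ustar) 0) + (k : ℝ) * lstar) := by
          rw [hsum_d]; ring
      _ = lam * min (topKSum n k a) r := by rw [hsum]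
  have hfeas : topKSum n k x ≤ r := by
    set ex : Equiv.Perm (Fin n) := Fin.revPerm.trans (Tuple.sort x) with hex
    have h2 : topKSum n k x = ∑ i : Fin n, if (i : ℕ) < k then x (ex i) else 0 := rfl
    have hxle : ∀ j, x j ≤ max (a j - ustar) 0 + lstar := by
      intro j; simp only [hx]
      by_cases h1 : ustar < a j
      · rw [if_pos h1, max_eq_left (by linarith)]; linarith
      · rw [if_neg h1]; push_neg at h1
        by_cases h2 : lstar ≤ a j
        · rw [if_pos h2]; have := le_max_right (a j - ustar) 0; linarith
        · rw [if_neg h2]; push_neg at h2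
          have := le_max_right (a j - ustar) 0; linarith
    calc topKSum n k x = ∑ i : Fin n, if (i : ℕ) < k then x (ex i) else 0 := h2
      _ ≤ ∑ i : Fin n, ((if (i : ℕ) < k then max (a (ex i) - ustar) 0 else 0)
            + (if (i : ℕ) < k then lstar else 0)) := by
          apply Finset.sum_le_sum; intro i _
          by_cases hik : (i : ℕ) < k
          · simp only [if_pos hik]; exact hxle (ex i)
          · simp only [if_neg hik]; simp
      _ ≤ (∑ i : Fin n, max (a (ex i) - ustar) 0) + (k : ℝ) * lstar := by
          rw [Finset.sum_add_distrib, sum_ite_const n k hk.le lstar]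
          apply add_le_add_left
          apply Finset.sum_le_sum; intro i _
          split
          · exact le_rfl
          · exact le_max_right _ _
      _ = (∑ j, max (a j - ustar) 0) + (k : ℝ) * lstar := by
          rw [Equiv.sum_comp ex (fun j => max (a j - ustar) 0)]
      _ = min (topKSum n k a) r := hsum
      _ ≤ r := min_le_right _ _
  refine ⟨hfeas, ?_⟩
  intro y hy
  show ∑ i : Fin n, (x i - a i) ^ 2 ≤ ∑ i : Fin n, (y i - a i) ^ 2
  have hdya : ∑ i, d i * a i ≤ lam * topKSum n k a :=
    keyA n k hk1 hk.le lam d a hd0 hd1 hsum_d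
  rcases le_total (topKSum n k a) r with hca | hca
  · have hmin : min (topKSum n k a) r = topKSum n k a := min_eq_left hca
    have hle0 : ∑ i : Fin n, (x i - a i) ^ 2 ≤ 0 := by
      have heq : ∑ i : Fin n, (x i - a i) ^ 2 = ∑ i, d i * a i - ∑ i, d i * x i := by
        rw [← Finset.sum_sub_distrib]
        apply Finset.sum_congr rfl; intro i _
        rw [show d i = a i - x i from (hd_eq i).symm]; ring
      rw [heq, hsum_dx, hmin]; linarith
    have h0 : (0 : ℝ) ≤ ∑ i : Fin n, (y i - a i) ^ 2 :=
      Finset.sum_nonneg fun i _ => sq_nonneg _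
    linarith
  · have hmin : min (topKSum n k a) r = r := min_eq_right hca
    have hdyy : ∑ i, d i * y i ≤ lam * topKSum n k y :=
      keyA n k hk1 hk.le lam d y hd0 hd1 hsum_d
    have h6 : ∑ i, d i * y i ≤ lam * r :=
      hdyy.trans (mul_le_mul_of_nonneg_left hy hlam)
    have h5 : ∑ i, d i * x i = lam * r := by rw [hsum_dx, hmin]
    have hiden : ∑ i : Fin n, ((y i - a i) ^ 2 - (y i - x i) ^ 2 - (x i - a i) ^ 2)
        = 2 * (∑ i, d i * x i) - 2 * (∑ i, d i * y i) := by
      have hpt : ∀ i : Fin n, (y i - a i) ^ 2 - (y i - x i) ^ 2 - (x i - a i) ^ 2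
          = 2 * (d i * x i) - 2 * (d i * y i) := by
        intro i; rw [show d i = a i - x i from (hd_eq i).symm]; ring
      rw [Finset.sum_congr rfl fun i _ => hpt i, Finset.sum_sub_distrib,
        ← Finset.mul_sum, ← Finset.mul_sum]
    have hsub : ∑ i : Fin n, ((y i - a i) ^ 2 - (y i - x i) ^ 2 - (x i - a i) ^ 2)
        = ∑ i : Fin n, (y i - a i) ^ 2 - ∑ i : Fin n, (y i - x i) ^ 2
          - ∑ i : Fin n, (x i - a i) ^ 2 := by
      rw [Finset.sum_sub_distrib, Finset.sum_sub_distrib]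
    have hC : (0 : ℝ) ≤ ∑ i : Fin n, (y i - x i) ^ 2 :=
      Finset.sum_nonneg fun i _ => sq_nonneg _
    linarith [hiden, hsub]
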